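/- The graded ℚ-algebra ℚ[ρ,b₁,b₂,d₂]/(I_Q + ⟨b₂−d₂, b₁²−3d₂, d₂−b₁ρ+3ρ², b₁b₂, d₂²⟩) has Hilbert series 1 + 2t + 2t² + t³: its homogeneous components have ℚ-dimensions 1, 2, 2, 1 in degrees 0, 1, 2, 3 respectively, and 0 in all degrees greater than 3. -/

import Mathlib

open MvPolynomial

noncomputable section

/-- Variables of ℚ[ρ,b₁,b₂,d₂]: `X 0 = ρ`, `X 1 = b₁`, `X 2 = b₂`, `X 3 = d₂`. -/
abbrev PQ := MvPolynomial (Fin 4) ℚ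

/-- The ideal I_Q presenting the Chow ring of Q = ℙ(U). -/
def IQ : Ideal PQ := Ideal.span
  { X 1 ^ 2 * X 3 - 3 * X 3 ^ 2,
    X 1 ^ 2 * X 2 - X 2 * X 3 - 3 * X 3 ^ 2,
    X 1 ^ 4 + 3 * X 2 ^ 2 - 9 * X 2 * X 3 - 3 * X 3 ^ 2,
    2 * X 1 * X 2 * X 3 - 3 * X 1 * X 3 ^ 2,
    3 * X 1 * X 2 ^ 2 - 7 * X 1 * X 3 ^ 2,
    X 0 ^ 12 + 3 * X 0 ^ 11 * X 1 + 3 * X 0 ^ 10 * (X 1 ^ 2 + 2 * X 2 - X 3)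
      + X 0 ^ 9 * (-X 1 ^ 3 + 12 * X 1 * X 2 + 2 * X 1 * X 3)
      + 3 * X 0 ^ 8 * (9 * X 2 ^ 2 - 16 * X 2 * X 3 + 17 * X 3 ^ 2)
      + 28 * X 0 ^ 7 * X 1 * X 3 ^ 2 + 56 * X 0 ^ 6 * X 3 ^ 3 }

/-- The extra generators b₂−d₂, b₁²−3d₂, d₂−b₁ρ+3ρ², b₁b₂, d₂². -/
def K : Set PQ :=
  { X 2 - X 3, X 1 ^ 2 - 3 * X 3, X 3 - X 1 * X 0 + 3 * X 0 ^ 2, X 1 * X 2, X 3 ^ 2 }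

/-- The full ideal I_Q + ⟨b₂−d₂, b₁²−3d₂, d₂−b₁ρ+3ρ², b₁b₂, d₂²⟩. -/
def Itot : Ideal PQ := IQ ⊔ Ideal.span K

/-- The grading weights: deg ρ = deg b₁ = 1, deg b₂ = deg d₂ = 2. -/
def w : Fin 4 → ℕ := ![1, 1, 2, 2]

/-- The degree-`i` homogeneous component of ℚ[ρ,b₁,b₂,d₂]/(I_Q + ⟨…⟩). -/
def component (i : ℕ) : Submodule ℚ (PQ ⧸ Itot) :=
  (weightedHomogeneousSubmodule ℚ w i).map (Ideal.Quotient.mkₐ ℚ Itot).toLinearMap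


-- A-side model
abbrev B0 := AdjoinRoot ((Polynomial.X : Polynomial ℚ) ^ 3)

def x0 : B0 := AdjoinRoot.root _

lemma hx3 : x0 ^ 3 = 0 := by
  show (AdjoinRoot.root _) ^ 3 = 0
  rw [← AdjoinRoot.mk_X, ← map_pow, AdjoinRoot.mk_self]

def pb0 : PowerBasis ℚ B0 := AdjoinRoot.powerBasis' (Polynomial.monic_X_pow 3)

lemma pb0_dim : pb0.dim = 3 := by simp [pb0]

instance : Nontrivial B0 :=
  nontrivial_of_ne (pb0.basis ⟨0, by rw [pb0_dim]; norm_num⟩) 0 (pb0.basis.ne_zero _)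

def qpol : Polynomial B0 :=
  Polynomial.X ^ 2 + Polynomial.C (-3 * x0) * Polynomial.X + Polynomial.C (9 * x0 ^ 2)

lemma qpol_monic : qpol.Monic := by
  have : qpol = Polynomial.X ^ 2 +
      (Polynomial.C (-3 * x0) * Polynomial.X + Polynomial.C (9 * x0 ^ 2)) := by
    rw [qpol, add_assoc]
  rw [this]
  refine Polynomial.monic_X_pow_add ?_
  refine lt_of_le_of_lt (Polynomial.degree_linear_le) ?_
  decide

lemma qpol_natDegree : qpol.natDegree = 2 := by
  have : qpol = Polynomial.C 1 * Polynomial.X ^ 2 +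
      Polynomial.C (-3 * x0) * Polynomial.X + Polynomial.C (9 * x0 ^ 2) := by
    rw [qpol, map_one, one_mul]
  rw [this]
  exact Polynomial.natDegree_quadratic one_ne_zero

abbrev A := AdjoinRoot qpol

def rr : A := AdjoinRoot.of qpol x0
def bb : A := AdjoinRoot.root qpol
def dd : A := bb * rr - 3 * rr ^ 2

lemma dd_def : dd = bb * rr - 3 * rr ^ 2 := rfl

lemma hr : rr ^ 3 = 0 := by
  rw [rr, ← map_pow, hx3, map_zero]

lemma hb : bb ^ 2 = 3 * bb * rr - 9 * rr ^ 2 := by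
  have h0 : AdjoinRoot.mk qpol (Polynomial.X ^ 2 + Polynomial.C (-3 * x0) * Polynomial.X
      + Polynomial.C (9 * x0 ^ 2)) = 0 := by
    rw [← qpol]; exact AdjoinRoot.mk_self
  simp only [map_add, map_mul, map_pow, map_neg, map_ofNat, AdjoinRoot.mk_X,
    AdjoinRoot.mk_C] at h0
  unfold bb rr
  linear_combination h0



def pbA : PowerBasis B0 A := AdjoinRoot.powerBasis' qpol_monic

lemma pbA_dim : pbA.dim = 2 := by simp [pbA, qpol_natDegree]

def b0b : Module.Basis (Fin 3) ℚ B0 := pb0.basis.reindex (finCongr pb0_dim)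
def bAb : Module.Basis (Fin 2) B0 A := pbA.basis.reindex (finCongr pbA_dim)
def bAQ : Module.Basis (Fin 3 × Fin 2) ℚ A := b0b.smulTower bAb

lemma bAQ_apply (i : Fin 3) (j : Fin 2) : bAQ (i, j) = rr ^ (i : ℕ) * bb ^ (j : ℕ) := by
  rw [bAQ, Module.Basis.smulTower_apply, b0b, bAb, Module.Basis.reindex_apply, Module.Basis.reindex_apply,
    PowerBasis.basis_eq_pow, PowerBasis.basis_eq_pow, Algebra.smul_def,
    AdjoinRoot.algebraMap_eq, map_pow]
  simp [pb0, pbA, rr, bb, x0]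
  rfl

def fA : PQ →ₐ[ℚ] A := aeval ![rr, bb, dd, dd]

lemma fA_X0 : fA (X 0) = rr := by simp [fA]
lemma fA_X1 : fA (X 1) = bb := by simp [fA]
lemma fA_X2 : fA (X 2) = dd := by simp [fA]
lemma fA_X3 : fA (X 3) = dd := by simp [fA]



lemma fA_Itot : ∀ p ∈ Itot, fA p = 0 := by
  have h : Itot ≤ RingHom.ker fA.toRingHom := by
    rw [Itot]
    apply sup_le
    · rw [IQ, Ideal.span_le]
      rintro x hx
      simp only [Set.mem_insert_iff, Set.mem_singleton_iff] at hx
      rw [SetLike.mem_coe, RingHom.mem_ker, AlgHom.toRingHom_eq_coe, RingHom.coe_coe]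
      rcases hx with rfl|rfl|rfl|rfl|rfl|rfl
      · simp only [map_sub, map_mul, map_pow, map_ofNat, fA_X1, fA_X3]
        unfold dd
        linear_combination (rr*bb - 3*rr^2) * hb
      · simp only [map_sub, map_mul, map_pow, map_ofNat, fA_X1, fA_X2, fA_X3]
        unfold dd
        linear_combination (rr*bb - 4*rr^2) * hb + 3*bb*hr
      · simp only [map_add, map_sub, map_mul, map_pow, map_ofNat, fA_X1, fA_X2, fA_X3]
        unfold dd
        linear_combination (bb^2 + 3*rr*bb - 9*rr^2) * hb
      · simp only [map_sub, map_mul, map_pow, map_ofNat, fA_X1, fA_X2, fA_X3]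
        unfold dd
        linear_combination (-rr^2*bb + 3*rr^3) * hb + (9*rr*bb - 27*rr^2) * hr
      · simp only [map_sub, map_mul, map_pow, map_ofNat, fA_X1, fA_X2, fA_X3]
        unfold dd
        linear_combination (-4*rr^2*bb + 12*rr^3) * hb + (36*rr*bb - 108*rr^2) * hr
      · simp only [map_add, map_sub, map_neg, map_mul, map_pow, map_ofNat,
          fA_X0, fA_X1, fA_X2, fA_X3]
        unfold dd
        linear_combination (83*rr^9*bb - 376*rr^10) * hb + (-327*rr^8*bb + 2134*rr^9) * hr
    · rw [Ideal.span_le]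
      rintro x hx
      simp only [K, Set.mem_insert_iff, Set.mem_singleton_iff] at hx
      rw [SetLike.mem_coe, RingHom.mem_ker, AlgHom.toRingHom_eq_coe, RingHom.coe_coe]
      rcases hx with rfl|rfl|rfl|rfl|rfl
      · simp only [map_sub, fA_X2, fA_X3]; ring
      · simp only [map_sub, map_mul, map_pow, map_ofNat, fA_X1, fA_X3]
        unfold dd
        linear_combination hb
      · simp only [map_add, map_sub, map_mul, map_pow, map_ofNat, fA_X0, fA_X1, fA_X3]
        unfold dd
        ring
      · simp only [map_mul, fA_X1, fA_X2]
        unfold dd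
        linear_combination rr*hb - 9*hr
      · simp only [map_pow, fA_X3]
        unfold dd
        linear_combination rr^2*hb - 3*bb*hr
  intro p hp
  have := h hp
  rwa [RingHom.mem_ker, AlgHom.toRingHom_eq_coe, RingHom.coe_coe] at this

def fbar : PQ ⧸ Itot →ₐ[ℚ] A := Ideal.Quotient.liftₐ Itot fA fA_Itot

lemma fbar_mk (p : PQ) : fbar (Ideal.Quotient.mk Itot p) = fA p := by
  rw [fbar, Ideal.Quotient.liftₐ_apply]
  rfl



def RR : PQ ⧸ Itot := Ideal.Quotient.mk Itot (X 0)
def BB : PQ ⧸ Itot := Ideal.Quotient.mk Itot (X 1)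
def BB2 : PQ ⧸ Itot := Ideal.Quotient.mk Itot (X 2)
def DD : PQ ⧸ Itot := Ideal.Quotient.mk Itot (X 3)

lemma mkK {p : PQ} (hp : p ∈ K) : Ideal.Quotient.mk Itot p = 0 :=
  Ideal.Quotient.eq_zero_iff_mem.2
    ((show Ideal.span K ≤ Itot from by rw [Itot]; exact le_sup_right) (Ideal.subset_span hp))

lemma e1 : BB2 = DD := by
  have h := mkK (p := X 2 - X 3) (by simp [K])
  simp only [map_sub] at h
  unfold BB2 DD; linear_combination h

lemma e2 : BB ^ 2 = 3 * DD := by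
  have h := mkK (p := X 1 ^ 2 - 3 * X 3) (by simp [K])
  simp only [map_sub, map_mul, map_pow, map_ofNat] at h
  unfold BB DD; linear_combination h

lemma e3 : DD = BB * RR - 3 * RR ^ 2 := by
  have h := mkK (p := X 3 - X 1 * X 0 + 3 * X 0 ^ 2) (by simp [K])
  simp only [map_add, map_sub, map_mul, map_pow, map_ofNat] at h
  unfold RR BB DD; linear_combination h

lemma e4 : BB * BB2 = 0 := by
  have h := mkK (p := X 1 * X 2) (by simp [K])
  simp only [map_mul] at h
  unfold BB BB2; linear_combination h

lemma e5 : DD ^ 2 = 0 := by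
  have h := mkK (p := X 3 ^ 2) (by simp [K])
  simp only [map_pow] at h
  unfold DD; linear_combination h

lemma mul_cancel {x : PQ ⧸ Itot} {n : ℚ} (hn : n ≠ 0)
    (h : (algebraMap ℚ (PQ ⧸ Itot) n) * x = 0) : x = 0 := by
  have h2 := congrArg (fun z => (algebraMap ℚ (PQ ⧸ Itot) n⁻¹) * z) h
  simpa [← mul_assoc, ← map_mul, inv_mul_cancel₀ hn] using h2

lemma R3 : RR ^ 3 = 0 := by
  apply mul_cancel (n := 9) (by norm_num)
  rw [map_ofNat]
  linear_combination BB*e1 + BB*e3 + RR*e2 + 3*RR*e3 - e4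

lemma z2 : BB2 * DD = 0 := by linear_combination DD*e1 + e5
lemma z3 : BB2 ^ 2 = 0 := by linear_combination (BB2 + DD)*e1 + e5
lemma z5 : BB * DD = 0 := by linear_combination e4 - BB*e1
lemma z6 : RR ^ 2 * DD = 0 := by linear_combination RR^2*e3 + (BB - 3*RR)*R3
lemma z7 : RR ^ 2 * BB2 = 0 := by linear_combination RR^2*e1 + RR^2*e3 + (BB - 3*RR)*R3
lemma z8 : RR ^ 4 = 0 := by linear_combination RR*R3
lemma z9 : RR ^ 3 * BB = 0 := by linear_combination BB*R3
lemma z10 : RR ^ 2 * BB ^ 2 = 0 := by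
  linear_combination RR^2*e2 + 3*(RR^2*e3 + (BB - 3*RR)*R3)
lemma z11 : RR * BB ^ 3 = 0 := by linear_combination RR*BB*e2 + 3*RR*(e4 - BB*e1)
lemma z12 : BB ^ 4 = 0 := by linear_combination (BB^2 + 3*DD)*e2 + 9*e5
lemma B3 : BB ^ 3 = 0 := by linear_combination BB*e2 + 3*(e4 - BB*e1)



open Submodule

set_option maxHeartbeats 1600000 in
lemma Q4 (a b c e : ℕ) (h : 4 ≤ a + b + 2*c + 2*e) :
    RR^a * BB^b * BB2^c * DD^e = 0 := by
  by_cases h2e : 2 ≤ e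
  · obtain ⟨e', rfl⟩ : ∃ e', e = e' + 2 := ⟨e - 2, by omega⟩
    calc RR^a * BB^b * BB2^c * DD^(e'+2)
        = (RR^a * BB^b * BB2^c * DD^e') * DD^2 := by ring
      _ = 0 := by rw [e5, mul_zero]
  by_cases h2c : 2 ≤ c
  · obtain ⟨c', rfl⟩ : ∃ c', c = c' + 2 := ⟨c - 2, by omega⟩
    calc RR^a * BB^b * BB2^(c'+2) * DD^e
        = (RR^a * BB^b * BB2^c' * DD^e) * BB2^2 := by ring
      _ = 0 := by rw [z3, mul_zero]
  by_cases hce : 1 ≤ c ∧ 1 ≤ e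
  · obtain ⟨c', rfl⟩ : ∃ c', c = c' + 1 := ⟨c - 1, by omega⟩
    obtain ⟨e', rfl⟩ : ∃ e', e = e' + 1 := ⟨e - 1, by omega⟩
    calc RR^a * BB^b * BB2^(c'+1) * DD^(e'+1)
        = (RR^a * BB^b * BB2^c' * DD^e') * (BB2 * DD) := by ring
      _ = 0 := by rw [z2, mul_zero]
  by_cases hc1 : c = 1
  · subst hc1
    have he0 : e = 0 := by omega
    subst he0
    by_cases hb1 : 1 ≤ b
    · obtain ⟨b', rfl⟩ : ∃ b', b = b' + 1 := ⟨b - 1, by omega⟩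
      calc RR^a * BB^(b'+1) * BB2^1 * DD^0
          = (RR^a * BB^b' * DD^0) * (BB * BB2) := by ring
        _ = 0 := by rw [e4, mul_zero]
    · obtain ⟨a', rfl⟩ : ∃ a', a = a' + 2 := ⟨a - 2, by omega⟩
      calc RR^(a'+2) * BB^b * BB2^1 * DD^0
          = (RR^a' * BB^b * DD^0) * (RR^2 * BB2) := by ring
        _ = 0 := by rw [z7, mul_zero]
  by_cases he1 : e = 1
  · subst he1
    have hc0 : c = 0 := by omega
    subst hc0
    by_cases hb1 : 1 ≤ b
    · obtain ⟨b', rfl⟩ : ∃ b', b = b' + 1 := ⟨b - 1, by omega⟩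
      calc RR^a * BB^(b'+1) * BB2^0 * DD^1
          = (RR^a * BB^b' * BB2^0) * (BB * DD) := by ring
        _ = 0 := by rw [z5, mul_zero]
    · obtain ⟨a', rfl⟩ : ∃ a', a = a' + 2 := ⟨a - 2, by omega⟩
      calc RR^(a'+2) * BB^b * BB2^0 * DD^1
          = (RR^a' * BB^b * BB2^0) * (RR^2 * DD) := by ring
        _ = 0 := by rw [z6, mul_zero]
  · have hc0 : c = 0 := by omega
    have he0 : e = 0 := by omega
    subst hc0; subst he0
    by_cases hb4 : 4 ≤ b
    · obtain ⟨b', rfl⟩ : ∃ b', b = b' + 4 := ⟨b - 4, by omega⟩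
      calc RR^a * BB^(b'+4) * BB2^0 * DD^0
          = (RR^a * BB^b' * BB2^0 * DD^0) * BB^4 := by ring
        _ = 0 := by rw [z12, mul_zero]
    by_cases hb3 : b = 3
    · subst hb3
      obtain ⟨a', rfl⟩ : ∃ a', a = a' + 1 := ⟨a - 1, by omega⟩
      calc RR^(a'+1) * BB^3 * BB2^0 * DD^0
          = (RR^a' * BB2^0 * DD^0) * (RR * BB^3) := by ring
        _ = 0 := by rw [z11, mul_zero]
    by_cases hb2 : b = 2
    · subst hb2
      obtain ⟨a', rfl⟩ : ∃ a', a = a' + 2 := ⟨a - 2, by omega⟩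
      calc RR^(a'+2) * BB^2 * BB2^0 * DD^0
          = (RR^a' * BB2^0 * DD^0) * (RR^2 * BB^2) := by ring
        _ = 0 := by rw [z10, mul_zero]
    by_cases hb1 : b = 1
    · subst hb1
      obtain ⟨a', rfl⟩ : ∃ a', a = a' + 3 := ⟨a - 3, by omega⟩
      calc RR^(a'+3) * BB^1 * BB2^0 * DD^0
          = (RR^a' * BB2^0 * DD^0) * (RR^3 * BB) := by ring
        _ = 0 := by rw [z9, mul_zero]
    · have hb0 : b = 0 := by omega
      subst hb0
      obtain ⟨a', rfl⟩ : ∃ a', a = a' + 4 := ⟨a - 4, by omega⟩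
      calc RR^(a'+4) * BB^0 * BB2^0 * DD^0
          = (RR^a' * BB^0 * BB2^0 * DD^0) * RR^4 := by ring
        _ = 0 := by rw [z8, mul_zero]

lemma mem_nat_mul {S : Submodule ℚ (PQ ⧸ Itot)} {x : PQ ⧸ Itot} (n : ℕ) (hx : x ∈ S) :
    ((n : ℕ) : PQ ⧸ Itot) * x ∈ S := by
  rw [← nsmul_eq_mul]
  exact S.toAddSubmonoid.nsmul_mem hx n



open Submodule

set_option maxHeartbeats 1600000 in
lemma enum0 (a b c e : ℕ) (h : a + b + 2*c + 2*e = 0) :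
    RR^a * BB^b * BB2^c * DD^e ∈ Submodule.span ℚ ({1} : Set (PQ ⧸ Itot)) := by
  have ha : a = 0 := by omega
  have hb : b = 0 := by omega
  have hc : c = 0 := by omega
  have he : e = 0 := by omega
  subst ha; subst hb; subst hc; subst he
  rw [show RR^0 * BB^0 * BB2^0 * DD^0 = 1 by ring]
  exact subset_span rfl

set_option maxHeartbeats 1600000 in
lemma enum1 (a b c e : ℕ) (h : a + b + 2*c + 2*e = 1) :
    RR^a * BB^b * BB2^c * DD^e ∈ Submodule.span ℚ ({RR, BB} : Set (PQ ⧸ Itot)) := by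
  have hc : c = 0 := by omega
  have he : e = 0 := by omega
  subst hc; subst he
  rcases (show a = 1 ∧ b = 0 ∨ a = 0 ∧ b = 1 by omega) with ⟨rfl, rfl⟩ | ⟨rfl, rfl⟩
  · rw [show RR^1 * BB^0 * BB2^0 * DD^0 = RR by ring]
    exact subset_span (by simp)
  · rw [show RR^0 * BB^1 * BB2^0 * DD^0 = BB by ring]
    exact subset_span (by simp)

set_option maxHeartbeats 1600000 in
lemma enum2 (a b c e : ℕ) (h : a + b + 2*c + 2*e = 2) :
    RR^a * BB^b * BB2^c * DD^e ∈ Submodule.span ℚ ({RR^2, RR*BB} : Set (PQ ⧸ Itot)) := by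
  have hmem1 : RR^2 ∈ Submodule.span ℚ ({RR^2, RR*BB} : Set (PQ ⧸ Itot)) :=
    subset_span (by simp)
  have hmem2 : RR*BB ∈ Submodule.span ℚ ({RR^2, RR*BB} : Set (PQ ⧸ Itot)) :=
    subset_span (by simp)
  rcases (show (a = 2 ∧ b = 0 ∧ c = 0 ∧ e = 0) ∨ (a = 1 ∧ b = 1 ∧ c = 0 ∧ e = 0)
      ∨ (a = 0 ∧ b = 2 ∧ c = 0 ∧ e = 0) ∨ (a = 0 ∧ b = 0 ∧ c = 1 ∧ e = 0)
      ∨ (a = 0 ∧ b = 0 ∧ c = 0 ∧ e = 1) by omega) with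
    ⟨rfl,rfl,rfl,rfl⟩|⟨rfl,rfl,rfl,rfl⟩|⟨rfl,rfl,rfl,rfl⟩|⟨rfl,rfl,rfl,rfl⟩|⟨rfl,rfl,rfl,rfl⟩
  · rw [show RR^2 * BB^0 * BB2^0 * DD^0 = RR^2 by ring]; exact hmem1
  · rw [show RR^1 * BB^1 * BB2^0 * DD^0 = RR*BB by ring]; exact hmem2
  · rw [show RR^0 * BB^2 * BB2^0 * DD^0 = ((3:ℕ) : PQ ⧸ Itot)*(RR*BB) - ((9:ℕ) : PQ ⧸ Itot)*RR^2
      by push_cast; linear_combination e2 + 3*e3]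
    exact sub_mem (mem_nat_mul 3 hmem2) (mem_nat_mul 9 hmem1)
  · rw [show RR^0 * BB^0 * BB2^1 * DD^0 = ((1:ℕ) : PQ ⧸ Itot)*(RR*BB) - ((3:ℕ) : PQ ⧸ Itot)*RR^2
      by push_cast; linear_combination e1 + e3]
    exact sub_mem (mem_nat_mul 1 hmem2) (mem_nat_mul 3 hmem1)
  · rw [show RR^0 * BB^0 * BB2^0 * DD^1 = ((1:ℕ) : PQ ⧸ Itot)*(RR*BB) - ((3:ℕ) : PQ ⧸ Itot)*RR^2
      by push_cast; linear_combination e3]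
    exact sub_mem (mem_nat_mul 1 hmem2) (mem_nat_mul 3 hmem1)

set_option maxHeartbeats 1600000 in
lemma enum3 (a b c e : ℕ) (h : a + b + 2*c + 2*e = 3) :
    RR^a * BB^b * BB2^c * DD^e ∈ Submodule.span ℚ ({RR^2*BB} : Set (PQ ⧸ Itot)) := by
  have hmem : RR^2*BB ∈ Submodule.span ℚ ({RR^2*BB} : Set (PQ ⧸ Itot)) := subset_span rfl
  rcases (show (a = 3 ∧ b = 0 ∧ c = 0 ∧ e = 0) ∨ (a = 2 ∧ b = 1 ∧ c = 0 ∧ e = 0)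
      ∨ (a = 1 ∧ b = 2 ∧ c = 0 ∧ e = 0) ∨ (a = 0 ∧ b = 3 ∧ c = 0 ∧ e = 0)
      ∨ (a = 1 ∧ b = 0 ∧ c = 1 ∧ e = 0) ∨ (a = 1 ∧ b = 0 ∧ c = 0 ∧ e = 1)
      ∨ (a = 0 ∧ b = 1 ∧ c = 1 ∧ e = 0) ∨ (a = 0 ∧ b = 1 ∧ c = 0 ∧ e = 1) by omega) with
    ⟨rfl,rfl,rfl,rfl⟩|⟨rfl,rfl,rfl,rfl⟩|⟨rfl,rfl,rfl,rfl⟩|⟨rfl,rfl,rfl,rfl⟩|⟨rfl,rfl,rfl,rfl⟩|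
      ⟨rfl,rfl,rfl,rfl⟩|⟨rfl,rfl,rfl,rfl⟩|⟨rfl,rfl,rfl,rfl⟩
  · rw [show RR^3 * BB^0 * BB2^0 * DD^0 = RR^3 by ring, R3]; exact zero_mem _
  · rw [show RR^2 * BB^1 * BB2^0 * DD^0 = RR^2*BB by ring]; exact hmem
  · rw [show RR^1 * BB^2 * BB2^0 * DD^0 = ((3:ℕ) : PQ ⧸ Itot)*(RR^2*BB)
      by push_cast; linear_combination RR*e2 + 3*RR*e3 - 9*R3]
    exact mem_nat_mul 3 hmem
  · rw [show RR^0 * BB^3 * BB2^0 * DD^0 = BB^3 by ring, B3]; exact zero_mem _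
  · rw [show RR^1 * BB^0 * BB2^1 * DD^0 = ((1:ℕ) : PQ ⧸ Itot)*(RR^2*BB)
      by push_cast; linear_combination RR*e1 + RR*e3 - 3*R3]
    exact mem_nat_mul 1 hmem
  · rw [show RR^1 * BB^0 * BB2^0 * DD^1 = ((1:ℕ) : PQ ⧸ Itot)*(RR^2*BB)
      by push_cast; linear_combination RR*e3 - 3*R3]
    exact mem_nat_mul 1 hmem
  · rw [show RR^0 * BB^1 * BB2^1 * DD^0 = BB*BB2 by ring, e4]; exact zero_mem _
  · rw [show RR^0 * BB^1 * BB2^0 * DD^1 = BB*DD by ring, z5]; exact zero_mem _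



open Submodule

lemma weight_eq (d : Fin 4 →₀ ℕ) :
    (Finsupp.weight w d : ℕ) = d 0 + d 1 + 2 * d 2 + 2 * d 3 := by
  rw [Finsupp.weight_apply, Finsupp.sum_fintype _ _ (fun i => by simp), Fin.sum_univ_four]
  simp only [smul_eq_mul, w, Matrix.cons_val_zero, Matrix.cons_val_one, Matrix.head_cons,
    Matrix.cons_val_two, Matrix.tail_cons, Matrix.cons_val_three, Matrix.head_fin_const]
  ring

lemma monomial_eq_prod (d : Fin 4 →₀ ℕ) :
    (monomial d (1:ℚ) : PQ) = X 0 ^ d 0 * X 1 ^ d 1 * X 2 ^ d 2 * X 3 ^ d 3 := by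
  rw [monomial_eq, C_1, one_mul, Finsupp.prod_fintype _ _ (fun i => pow_zero _),
    Fin.prod_univ_four]

lemma mk_monomial (d : Fin 4 →₀ ℕ) :
    Ideal.Quotient.mk Itot (monomial d (1:ℚ)) = RR ^ d 0 * BB ^ d 1 * BB2 ^ d 2 * DD ^ d 3 := by
  rw [monomial_eq_prod, map_mul, map_mul, map_mul, map_pow, map_pow, map_pow, map_pow]
  rfl

lemma comp_le (i : ℕ) (S : Submodule ℚ (PQ ⧸ Itot))
    (h : ∀ d : Fin 4 →₀ ℕ, Finsupp.weight w d = i →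
      Ideal.Quotient.mk Itot (monomial d (1:ℚ)) ∈ S) :
    component i ≤ S := by
  rw [component, Submodule.map_le_iff_le_comap]
  intro p hp
  have hp' : MvPolynomial.IsWeightedHomogeneous w p i := hp
  rw [Submodule.mem_comap, AlgHom.toLinearMap_apply]
  rw [p.as_sum, map_sum]
  refine Submodule.sum_mem _ fun d hd => ?_
  have hw := hp' (MvPolynomial.mem_support_iff.mp hd)
  rw [show (monomial d (coeff d p) : PQ) = (coeff d p) • monomial d (1:ℚ) from by
      rw [MvPolynomial.smul_monomial, smul_eq_mul, mul_one],
    map_smul]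
  refine S.smul_mem _ ?_
  exact h d hw

lemma hwX0 : (X 0 : PQ) ∈ weightedHomogeneousSubmodule ℚ w 1 := isWeightedHomogeneous_X ℚ w 0
lemma hwX1 : (X 1 : PQ) ∈ weightedHomogeneousSubmodule ℚ w 1 := isWeightedHomogeneous_X ℚ w 1

lemma hwX00 : (X 0 ^ 2 : PQ) ∈ weightedHomogeneousSubmodule ℚ w 2 := by
  rw [mem_weightedHomogeneousSubmodule, pow_two]
  exact (isWeightedHomogeneous_X ℚ w 0).mul (isWeightedHomogeneous_X ℚ w 0)

lemma hwX01 : (X 0 * X 1 : PQ) ∈ weightedHomogeneousSubmodule ℚ w 2 :=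
  (isWeightedHomogeneous_X ℚ w 0).mul (isWeightedHomogeneous_X ℚ w 1)

lemma hwX001 : (X 0 ^ 2 * X 1 : PQ) ∈ weightedHomogeneousSubmodule ℚ w 3 := by
  rw [mem_weightedHomogeneousSubmodule, pow_two]
  exact ((isWeightedHomogeneous_X ℚ w 0).mul (isWeightedHomogeneous_X ℚ w 0)).mul
    (isWeightedHomogeneous_X ℚ w 1)

lemma comp0 : component 0 = Submodule.span ℚ ({1} : Set (PQ ⧸ Itot)) := by
  apply le_antisymm
  · refine comp_le 0 _ fun d hw => ?_
    rw [mk_monomial]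
    exact enum0 _ _ _ _ (by have := weight_eq d; omega)
  · rw [Submodule.span_le]
    rintro x hx
    rw [Set.mem_singleton_iff] at hx
    subst hx
    rw [SetLike.mem_coe, component]
    exact Submodule.mem_map.mpr ⟨1, isWeightedHomogeneous_one ℚ w, by simp⟩

lemma comp1 : component 1 = Submodule.span ℚ ({RR, BB} : Set (PQ ⧸ Itot)) := by
  apply le_antisymm
  · refine comp_le 1 _ fun d hw => ?_
    rw [mk_monomial]
    exact enum1 _ _ _ _ (by have := weight_eq d; omega)
  · rw [Submodule.span_le]
    rintro x hx
    rcases hx with rfl | hx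
    · rw [SetLike.mem_coe, component]
      exact Submodule.mem_map.mpr ⟨X 0, hwX0, rfl⟩
    · rw [Set.mem_singleton_iff] at hx
      subst hx
      rw [SetLike.mem_coe, component]
      exact Submodule.mem_map.mpr ⟨X 1, hwX1, rfl⟩

lemma comp2 : component 2 = Submodule.span ℚ ({RR^2, RR*BB} : Set (PQ ⧸ Itot)) := by
  apply le_antisymm
  · refine comp_le 2 _ fun d hw => ?_
    rw [mk_monomial]
    exact enum2 _ _ _ _ (by have := weight_eq d; omega)
  · rw [Submodule.span_le]
    rintro x hx
    rcases hx with rfl | hx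
    · rw [SetLike.mem_coe, component]
      exact Submodule.mem_map.mpr ⟨X 0 ^ 2, hwX00, by simp [RR]⟩
    · rw [Set.mem_singleton_iff] at hx
      subst hx
      rw [SetLike.mem_coe, component]
      exact Submodule.mem_map.mpr ⟨X 0 * X 1, hwX01, by simp [RR, BB]⟩

lemma comp3 : component 3 = Submodule.span ℚ ({RR^2*BB} : Set (PQ ⧸ Itot)) := by
  apply le_antisymm
  · refine comp_le 3 _ fun d hw => ?_
    rw [mk_monomial]
    exact enum3 _ _ _ _ (by have := weight_eq d; omega)
  · rw [Submodule.span_le]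
    rintro x hx
    rw [Set.mem_singleton_iff] at hx
    subst hx
    rw [SetLike.mem_coe, component]
    exact Submodule.mem_map.mpr ⟨X 0 ^ 2 * X 1, hwX001, by simp [RR, BB]⟩

lemma compbot (i : ℕ) (hi : 3 < i) : component i = ⊥ := by
  rw [eq_bot_iff]
  refine comp_le i _ fun d hw => ?_
  rw [mk_monomial, Submodule.mem_bot]
  exact Q4 _ _ _ _ (by have := weight_eq d; omega)


lemma fbar_RR : fbar RR = rr := by rw [RR, fbar_mk, fA_X0]
lemma fbar_BB : fbar BB = bb := by rw [BB, fbar_mk, fA_X1]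

lemma indep1 : LinearIndependent ℚ ![RR, BB] := by
  apply LinearIndependent.of_comp fbar.toLinearMap
  have hc : fbar.toLinearMap ∘ ![RR, BB]
      = bAQ ∘ ![((1 : Fin 3), (0 : Fin 2)), ((0 : Fin 3), (1 : Fin 2))] := by
    funext x
    fin_cases x
    · show fbar RR = bAQ ((1 : Fin 3), (0 : Fin 2))
      rw [bAQ_apply, fbar_RR]; norm_num
    · show fbar BB = bAQ ((0 : Fin 3), (1 : Fin 2))
      rw [bAQ_apply, fbar_BB]; norm_num
  rw [hc]
  exact bAQ.linearIndependent.comp _ (by decide)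

lemma indep2 : LinearIndependent ℚ ![RR^2, RR*BB] := by
  apply LinearIndependent.of_comp fbar.toLinearMap
  have hc : fbar.toLinearMap ∘ ![RR^2, RR*BB]
      = bAQ ∘ ![((2 : Fin 3), (0 : Fin 2)), ((1 : Fin 3), (1 : Fin 2))] := by
    funext x
    fin_cases x
    · show fbar (RR^2) = bAQ ((2 : Fin 3), (0 : Fin 2))
      rw [bAQ_apply, map_pow, fbar_RR]; norm_num
    · show fbar (RR*BB) = bAQ ((1 : Fin 3), (1 : Fin 2))
      rw [bAQ_apply, map_mul, fbar_RR, fbar_BB]; norm_num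
  rw [hc]
  exact bAQ.linearIndependent.comp _ (by decide)

lemma one_ne : (1 : PQ ⧸ Itot) ≠ 0 := by
  have hA : (1 : A) ≠ 0 := by
    have h := bAQ.ne_zero ((0 : Fin 3), (0 : Fin 2))
    rw [bAQ_apply] at h
    simpa using h
  intro h
  exact hA (by rw [← map_one fbar, h, map_zero])

lemma nonzero3 : RR^2*BB ≠ 0 := by
  have h : fbar (RR^2*BB) = bAQ ((2 : Fin 3), (1 : Fin 2)) := by
    rw [bAQ_apply, map_mul, map_pow, fbar_RR, fbar_BB]; norm_num
  intro h0
  exact bAQ.ne_zero ((2 : Fin 3), (1 : Fin 2)) (by rw [← h, h0, map_zero])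

lemma rank0 : Module.finrank ℚ (component 0) = 1 := by
  rw [comp0]; exact finrank_span_singleton one_ne

lemma rank3 : Module.finrank ℚ (component 3) = 1 := by
  rw [comp3]; exact finrank_span_singleton nonzero3

lemma rank1 : Module.finrank ℚ (component 1) = 2 := by
  rw [comp1]
  have hs : ({RR, BB} : Set (PQ ⧸ Itot)) = Set.range ![RR, BB] := by
    simp only [Matrix.range_cons, Matrix.range_empty, Set.union_empty,
      Set.union_singleton]
    exact Set.pair_comm RR BB
  rw [hs, finrank_span_eq_card indep1]
  simp

lemma rank2 : Module.finrank ℚ (component 2) = 2 := by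
  rw [comp2]
  have hs : ({RR^2, RR*BB} : Set (PQ ⧸ Itot)) = Set.range ![RR^2, RR*BB] := by
    simp only [Matrix.range_cons, Matrix.range_empty, Set.union_empty,
      Set.union_singleton]
    exact Set.pair_comm (RR^2) (RR*BB)
  rw [hs, finrank_span_eq_card indep2]
  simp



/-- The Hilbert series of ℚ[ρ,b₁,b₂,d₂]/(I_Q + ⟨b₂−d₂, b₁²−3d₂, d₂−b₁ρ+3ρ², b₁b₂, d₂²⟩)
is 1 + 2t + 2t² + t³. -/
theorem hilbert_series_quotient :
    (∀ i : ℕ, Module.finrank ℚ (component i) = [1, 2, 2, 1].getD i 0) ∧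
    ∀ i : ℕ, 3 < i → component i = ⊥ := by
  constructor
  · intro i
    match i with
    | 0 => simpa using rank0
    | 1 => simpa using rank1
    | 2 => simpa using rank2
    | 3 => simpa using rank3
    | (n+4) =>
      rw [compbot _ (by omega), List.getD_eq_default _ _ (by simp)]
      exact finrank_bot ℚ _
  · exact fun i hi => compbot i hi
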